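/- For every pair of integers n ≥ 4 and τ ≥ 2 there exists a graph history 𝒢 = (G_1, …, G_τ) on an n-element vertex set V such that: (1) every score_m peeling sequence S_0 = V, S_1, …, S_{n−1} satisfies max_{0 ≤ i ≤ n−1} f_am(S_i, 𝒢) ≤ 1; and (2) there exists a nonempty S* ⊆ V with f_am(S*, 𝒢) = (n−2)·(τ−1)/τ. Consequently, the approximation ratio of the FindBFF_M algorithm for the BFF-am problem is O(1/n). (The instance: the first τ−1 snapshots consist of a clique on n−1 vertices together with one extra vertex v joined to a single clique vertex u; the last snapshot contains only the edge {u,v}.) -/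

import Mathlib

open scoped Classical
open Finset

/-- The degree of `u` in the subgraph of `G` induced by the vertex set `S`. -/
noncomputable def degIn {n : ℕ} (G : SimpleGraph (Fin n)) (S : Finset (Fin n)) (u : Fin n) : ℕ :=
  (S.filter fun v => G.Adj u v).card

/-- The number of edges of the subgraph of `G` induced by `S`. -/
noncomputable def edgesIn {n : ℕ} (G : SimpleGraph (Fin n)) (S : Finset (Fin n)) : ℕ :=
  ((S ×ˢ S).filter fun p => p.1 < p.2 ∧ G.Adj p.1 p.2).card

/-- Minimum density `d_m(S, G)`: the minimum degree in the induced subgraph `G[S]`. -/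
noncomputable def minDensity {n : ℕ} (G : SimpleGraph (Fin n)) (S : Finset (Fin n)) : ℕ :=
  sInf ((fun u => degIn G S u) '' (S : Set (Fin n)))

/-- Average density `d_a(S, G) = 2·|E(G[S])| / |S|`. -/
noncomputable def avgDensity {n : ℕ} (G : SimpleGraph (Fin n)) (S : Finset (Fin n)) : ℝ :=
  2 * (edgesIn G S : ℝ) / (S.card : ℝ)

/-- `f_mm(S, 𝒢) = min_t d_m(S, G_t)`. -/
noncomputable def fmm {n τ : ℕ} (G : Fin τ → SimpleGraph (Fin n)) (S : Finset (Fin n)) : ℕ :=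
  sInf (Set.range fun t => minDensity (G t) S)

/-- `f_am(S, 𝒢) = (1/τ) · Σ_t d_m(S, G_t)`. -/
noncomputable def fam {n τ : ℕ} (G : Fin τ → SimpleGraph (Fin n)) (S : Finset (Fin n)) : ℝ :=
  (1 / (τ : ℝ)) * ∑ t, (minDensity (G t) S : ℝ)

/-- `f_ma(S, 𝒢) = min_t d_a(S, G_t)`. -/
noncomputable def fma {n τ : ℕ} (G : Fin τ → SimpleGraph (Fin n)) (S : Finset (Fin n)) : ℝ :=
  sInf (Set.range fun t => avgDensity (G t) S)

/-- `f_aa(S, 𝒢) = (1/τ) · Σ_t d_a(S, G_t)`. -/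
noncomputable def faa {n τ : ℕ} (G : Fin τ → SimpleGraph (Fin n)) (S : Finset (Fin n)) : ℝ :=
  (1 / (τ : ℝ)) * ∑ t, avgDensity (G t) S

/-- `score_m(v, 𝒢[S]) = min_t degree(v, G_t[S])`. -/
noncomputable def scoreM {n τ : ℕ} (G : Fin τ → SimpleGraph (Fin n)) (S : Finset (Fin n))
    (v : Fin n) : ℕ :=
  sInf (Set.range fun t => degIn (G t) S v)

/-- `score_a(v, 𝒢[S]) = (1/τ) · Σ_t degree(v, G_t[S])`. -/
noncomputable def scoreA {n τ : ℕ} (G : Fin τ → SimpleGraph (Fin n)) (S : Finset (Fin n))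
    (v : Fin n) : ℝ :=
  (1 / (τ : ℝ)) * ∑ t, (degIn (G t) S v : ℝ)

/-- A `score_m` peeling sequence: `S 0 = V`, and at each step the removed vertex `v i`
minimizes `score_m` over the current set. -/
def IsScoreMPeeling {n τ : ℕ} (G : Fin τ → SimpleGraph (Fin n)) (S : ℕ → Finset (Fin n))
    (v : ℕ → Fin n) : Prop :=
  S 0 = Finset.univ ∧
    ∀ i < n - 1, v i ∈ S i ∧ S (i + 1) = S i \ {v i} ∧
      ∀ u ∈ S i, scoreM G (S i) (v i) ≤ scoreM G (S i) u

/-- A `score_a` peeling sequence: `S 0 = V`, and at each step the removed vertex `v i`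
minimizes `score_a` over the current set. -/
def IsScoreAPeeling {n τ : ℕ} (G : Fin τ → SimpleGraph (Fin n)) (S : ℕ → Finset (Fin n))
    (v : ℕ → Fin n) : Prop :=
  S 0 = Finset.univ ∧
    ∀ i < n - 1, v i ∈ S i ∧ S (i + 1) = S i \ {v i} ∧
      ∀ u ∈ S i, scoreA G (S i) (v i) ≤ scoreA G (S i) u

namespace BffAux

def Gfirst (n : ℕ) : SimpleGraph (Fin n) :=
  SimpleGraph.fromRel (fun a b => 1 ≤ a.val ∧ 1 ≤ b.val ∨ a.val = 0 ∧ b.val = 1)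

def Glast (n : ℕ) : SimpleGraph (Fin n) :=
  SimpleGraph.fromRel (fun a b => a.val = 0 ∧ b.val = 1)

lemma gfirst_adj {n : ℕ} {a b : Fin n} :
    (Gfirst n).Adj a b ↔ a ≠ b ∧
      (1 ≤ a.val ∧ 1 ≤ b.val ∨ a.val = 0 ∧ b.val = 1 ∨ b.val = 0 ∧ a.val = 1) := by
  simp only [Gfirst, SimpleGraph.fromRel_adj]
  tauto

lemma glast_adj {n : ℕ} {a b : Fin n} :
    (Glast n).Adj a b ↔ (a.val = 0 ∧ b.val = 1 ∨ b.val = 0 ∧ a.val = 1) := by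
  simp only [Glast, SimpleGraph.fromRel_adj]
  constructor
  · tauto
  · intro h
    refine ⟨?_, by tauto⟩
    intro hab
    subst hab
    omega

end BffAux

/-- For all `n ≥ 4`, `τ ≥ 2` there is a graph history on `n` vertices on which
every `score_m` peeling chain only contains sets of `f_am`-value at most `1`, while some
nonempty set has `f_am`-value `(n-2)(τ-1)/τ`; hence `FindBFF_M` has approximation ratio
`O(1/n)` for the BFF-am problem. -/

theorem findBffM_bad_for_bff_am (n τ : ℕ) (hn : 4 ≤ n) (hτ : 2 ≤ τ) :
    ∃ G : Fin τ → SimpleGraph (Fin n),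
      (∀ (S : ℕ → Finset (Fin n)) (v : ℕ → Fin n), IsScoreMPeeling G S v →
        ∀ i < n, fam G (S i) ≤ 1) ∧
      ∃ Sstar : Finset (Fin n), Sstar.Nonempty ∧
        fam G Sstar = ((n : ℝ) - 2) * ((τ : ℝ) - 1) / (τ : ℝ) := by
  have hτ0 : (0:ℝ) < (τ : ℝ) := by positivity
  set z0 : Fin n := ⟨0, by omega⟩ with hz0def
  set z1 : Fin n := ⟨1, by omega⟩ with hz1def
  set tl : Fin τ := ⟨τ - 1, by omega⟩ with htldef
  haveI : Nonempty (Fin τ) := ⟨tl⟩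
  set G : Fin τ → SimpleGraph (Fin n) :=
    fun t => if t = tl then BffAux.Glast n else BffAux.Gfirst n with hGdef
  have hne01 : z0 ≠ z1 := by simp [hz0def, hz1def, Fin.ext_iff]
  have hz0v : z0.val = 0 := rfl
  have hz1v : z1.val = 1 := rfl
  have hGtl : G tl = BffAux.Glast n := by simp [hGdef]
  have hGt : ∀ t, t ≠ tl → G t = BffAux.Gfirst n := by
    intro t ht; simp [hGdef, ht]
  -- z0 and z1 are adjacent in every snapshot
  have hadj01 : ∀ t, (G t).Adj z0 z1 := by
    intro t
    by_cases h : t = tl <;>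
      simp [hGdef, h, BffAux.glast_adj, BffAux.gfirst_adj, hne01, hz0def, hz1def]
  -- degree of z0 is at most 1 in every snapshot
  have hdeg0 : ∀ t (S : Finset (Fin n)), degIn (G t) S z0 ≤ 1 := by
    intro t S
    have hsub : (S.filter fun v => (G t).Adj z0 v) ⊆ {z1} := by
      intro x hx
      rw [Finset.mem_filter] at hx
      have hadj := hx.2
      rw [Finset.mem_singleton]
      by_cases h : t = tl
      · rw [h, hGtl, BffAux.glast_adj] at hadj
        simp only [Fin.ext_iff, hz0v, hz1v] at hadj ⊢
        omega
      · rw [hGt t h, BffAux.gfirst_adj] at hadj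
        simp only [Fin.ext_iff, hz0v, hz1v] at hadj ⊢
        omega
    calc degIn (G t) S z0 ≤ ({z1} : Finset (Fin n)).card := Finset.card_le_card hsub
      _ = 1 := Finset.card_singleton _
  have hminD_le : ∀ (G' : SimpleGraph (Fin n)) (S : Finset (Fin n)) (u : Fin n), u ∈ S →
      minDensity G' S ≤ degIn G' S u := by
    intro G' S u hu
    exact Nat.sInf_le ⟨u, hu, rfl⟩
  -- fam ≤ 1 for any set containing z0
  have hfamle : ∀ S : Finset (Fin n), z0 ∈ S → fam G S ≤ 1 := by
    intro S h0
    have hterm : ∀ t : Fin τ, (minDensity (G t) S : ℝ) ≤ 1 := by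
      intro t
      have : minDensity (G t) S ≤ 1 := le_trans (hminD_le _ _ _ h0) (hdeg0 t S)
      exact_mod_cast this
    have hsum : ∑ t : Fin τ, (minDensity (G t) S : ℝ) ≤ (τ : ℝ) := by
      calc ∑ t : Fin τ, (minDensity (G t) S : ℝ) ≤ ∑ _t : Fin τ, (1:ℝ) :=
            Finset.sum_le_sum fun t _ => hterm t
        _ = (τ : ℝ) := by simp
    rw [fam]
    rw [div_mul_eq_mul_div, one_mul, div_le_one hτ0]
    exact hsum
  -- fam of a singleton is ≤ 1
  have hfam_singleton : ∀ x : Fin n, fam G {x} ≤ 1 := by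
    intro x
    have hterm : ∀ t : Fin τ, minDensity (G t) {x} = 0 := by
      intro t
      have hd : degIn (G t) {x} x = 0 := by
        rw [degIn, Finset.card_eq_zero, Finset.filter_eq_empty_iff]
        intro y hy
        rw [Finset.mem_singleton] at hy
        subst hy
        exact (G t).irrefl
      have := hminD_le (G t) {x} x (Finset.mem_singleton_self x)
      omega
    rw [fam]
    have : ∑ t : Fin τ, (minDensity (G t) {x} : ℝ) = 0 := by
      apply Finset.sum_eq_zero
      intro t _
      rw [hterm t]; norm_num
    rw [this]
    norm_num
  refine ⟨G, ?_, ?_⟩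
  · -- peeling part
    rintro S v ⟨hS0, hstep⟩ i hi
    have key : ∀ j, j ≤ n - 2 → z0 ∈ S j ∧ z1 ∈ S j ∧ (S j).card = n - j := by
      intro j
      induction j with
      | zero =>
        intro _
        refine ⟨by simp [hS0], by simp [hS0], ?_⟩
        simp [hS0]
      | succ j ih =>
        intro hle
        obtain ⟨h0, h1, hcard⟩ := ih (by omega)
        obtain ⟨hv, hSucc, hmin⟩ := hstep j (by omega)
        -- there is a vertex w in S j different from z0 and z1
        have hwex : ∃ w ∈ S j, w ≠ z0 ∧ w ≠ z1 := by
          have hc2 : ({z0, z1} : Finset (Fin n)).card ≤ 2 := Finset.card_insert_le _ _ |>.trans (by simp)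
          have hsd : 1 ≤ (S j \ ({z0, z1} : Finset (Fin n))).card := by
            have := Finset.le_card_sdiff ({z0, z1} : Finset (Fin n)) (S j)
            omega
          obtain ⟨w, hw⟩ := Finset.card_pos.mp (show 0 < (S j \ ({z0, z1} : Finset (Fin n))).card by omega)
          rw [Finset.mem_sdiff, Finset.mem_insert, Finset.mem_singleton] at hw
          exact ⟨w, hw.1, fun h => hw.2 (Or.inl h), fun h => hw.2 (Or.inr h)⟩
        obtain ⟨w, hwS, hwz0, hwz1⟩ := hwex
        -- scoreM of w is 0
        have hscw : scoreM G (S j) w = 0 := by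
          have hd : degIn (G tl) (S j) w = 0 := by
            rw [degIn, Finset.card_eq_zero, Finset.filter_eq_empty_iff]
            intro y _
            rw [hGtl, BffAux.glast_adj]
            simp only [Ne, Fin.ext_iff, hz0v, hz1v] at hwz0 hwz1
            push_neg
            constructor <;> intro h <;> omega
          have : scoreM G (S j) w ≤ 0 := hd ▸ Nat.sInf_le ⟨tl, rfl⟩
          omega
        -- scoreM of z0 and z1 is at least 1
        have hsc0 : 1 ≤ scoreM G (S j) z0 := by
          apply le_csInf (Set.range_nonempty _)
          rintro b ⟨t, rfl⟩
          have : z1 ∈ (S j).filter fun y => (G t).Adj z0 y :=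
            Finset.mem_filter.mpr ⟨h1, hadj01 t⟩
          have := Finset.card_pos.mpr ⟨z1, this⟩
          exact this
        have hsc1 : 1 ≤ scoreM G (S j) z1 := by
          apply le_csInf (Set.range_nonempty _)
          rintro b ⟨t, rfl⟩
          have : z0 ∈ (S j).filter fun y => (G t).Adj z1 y :=
            Finset.mem_filter.mpr ⟨h0, ((hadj01 t).symm)⟩
          have := Finset.card_pos.mpr ⟨z0, this⟩
          exact this
        have hvz0 : v j ≠ z0 := by
          intro h
          have := hmin w hwS
          rw [h, hscw] at this
          omega
        have hvz1 : v j ≠ z1 := by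
          intro h
          have := hmin w hwS
          rw [h, hscw] at this
          omega
        refine ⟨?_, ?_, ?_⟩
        · rw [hSucc, Finset.mem_sdiff, Finset.mem_singleton]
          exact ⟨h0, fun h => hvz0 h.symm⟩
        · rw [hSucc, Finset.mem_sdiff, Finset.mem_singleton]
          exact ⟨h1, fun h => hvz1 h.symm⟩
        · rw [hSucc, Finset.card_sdiff_of_subset (by simpa using hv), Finset.card_singleton, hcard]
          omega
    rcases le_or_gt i (n - 2) with hle | hgt
    · exact hfamle _ (key i hle).1
    · -- i = n - 1
      have hieq : i = n - 1 := by omega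
      obtain ⟨h0, h1, hcard⟩ := key (n - 2) le_rfl
      obtain ⟨hv, hSucc, _⟩ := hstep (n - 2) (by omega)
      have hSi : S i = S (n - 2) \ {v (n - 2)} := by
        rw [hieq, show n - 1 = (n - 2) + 1 by omega]
        exact hSucc
      have hc1 : (S i).card = 1 := by
        rw [hSi, Finset.card_sdiff_of_subset (by simpa using hv), Finset.card_singleton, hcard]
        omega
      obtain ⟨x, hx⟩ := Finset.card_eq_one.mp hc1
      rw [hx]
      exact hfam_singleton x
  · -- optimal set
    refine ⟨Finset.univ.erase z0, ⟨z1, Finset.mem_erase.mpr ⟨hne01.symm, Finset.mem_univ _⟩⟩, ?_⟩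
    set Sstar : Finset (Fin n) := Finset.univ.erase z0 with hSdef
    have hz1S : z1 ∈ Sstar := Finset.mem_erase.mpr ⟨hne01.symm, Finset.mem_univ _⟩
    have hcardS : Sstar.card = n - 1 := by
      rw [hSdef, Finset.card_erase_of_mem (Finset.mem_univ _), Finset.card_univ, Fintype.card_fin]
    -- each member of Sstar has val ≥ 1
    have hmemval : ∀ u ∈ Sstar, 1 ≤ u.val := by
      intro u hu
      rw [hSdef, Finset.mem_erase] at hu
      have := hu.1
      simp only [Ne, Fin.ext_iff, hz0v] at this
      omega
    -- min density in the last snapshot is 0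
    have hlast : minDensity (G tl) Sstar = 0 := by
      have hd : degIn (G tl) Sstar z1 = 0 := by
        rw [degIn, Finset.card_eq_zero, Finset.filter_eq_empty_iff]
        intro y hy
        rw [hGtl, BffAux.glast_adj]
        have := hmemval y hy
        simp only [hz1v]
        push_neg
        constructor <;> intro h <;> omega
      have := hminD_le (G tl) Sstar z1 hz1S
      omega
    -- min density in earlier snapshots is n - 2
    have hdegS : ∀ u ∈ Sstar, ∀ t, t ≠ tl → degIn (G t) Sstar u = n - 2 := by
      intro u hu t ht
      have hfil : (Sstar.filter fun y => (G t).Adj u y) = Sstar.erase u := by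
        ext y
        simp only [Finset.mem_filter, Finset.mem_erase]
        constructor
        · rintro ⟨hyS, hadj⟩
          exact ⟨fun h => (G t).irrefl (h ▸ hadj), hyS⟩
        · rintro ⟨hyu, hyS⟩
          refine ⟨hyS, ?_⟩
          rw [hGt t ht, BffAux.gfirst_adj]
          exact ⟨fun h => hyu (h.symm), Or.inl ⟨hmemval u hu, hmemval y hyS⟩⟩
      rw [degIn, hfil, Finset.card_erase_of_mem hu, hcardS]
      omega
    have hfirst : ∀ t, t ≠ tl → minDensity (G t) Sstar = n - 2 := by
      intro t ht
      apply le_antisymm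
      · have := hminD_le (G t) Sstar z1 hz1S
        rw [hdegS z1 hz1S t ht] at this
        exact this
      · rw [minDensity]
        apply le_csInf
        · exact ⟨degIn (G t) Sstar z1, z1, hz1S, rfl⟩
        · rintro b ⟨u, hu, rfl⟩
          exact le_of_eq (hdegS u hu t ht).symm
    -- compute the sum
    have hterm : ∀ t : Fin τ, (minDensity (G t) Sstar : ℝ) =
        if t = tl then 0 else ((n : ℝ) - 2) := by
      intro t
      by_cases h : t = tl
      · rw [if_pos h, h, hlast]; norm_num
      · rw [if_neg h, hfirst t h]
        have : ((n - 2 : ℕ) : ℝ) = (n : ℝ) - 2 := by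
          have : (2:ℕ) ≤ n := by omega
          push_cast [Nat.cast_sub this]
          ring
        exact this
    rw [fam, Finset.sum_congr rfl fun t _ => hterm t]
    have hsum : ∑ t : Fin τ, (if t = tl then (0:ℝ) else ((n : ℝ) - 2)) =
        ((τ : ℝ) - 1) * ((n : ℝ) - 2) := by
      rw [← Finset.sum_erase_add Finset.univ _ (Finset.mem_univ tl)]
      rw [if_pos rfl, add_zero]
      rw [Finset.sum_congr rfl (fun t ht => if_neg (Finset.ne_of_mem_erase ht))]
      rw [Finset.sum_const, Finset.card_erase_of_mem (Finset.mem_univ _), Finset.card_univ,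
        Fintype.card_fin, nsmul_eq_mul]
      have : ((τ - 1 : ℕ) : ℝ) = (τ : ℝ) - 1 := by
        have : (1:ℕ) ≤ τ := by omega
        push_cast [Nat.cast_sub this]
        ring
      rw [this]
    rw [hsum]
    field_simp
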